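/- (Proposition 4.3(3)) For any normed BPA system G = (V, Act, R) and all α, β, γ ∈ V*: αγ ~ βγ in L_G if and only if α ~_{R_γ} β, i.e. α and β are branching bisimilar in the LTS L_{G,R_γ}. -/

import Mathlib

/-! Common definitions: labelled transition systems, branching bisimulation,
branching bisimilarity, silent states, class-change norm, BPA systems,
right-to-left finite transducers. -/

/-- A τ-path `t = t₀ →τ t₁ →τ ⋯ →τ t_k` in which every state after `t₀`
is related to `s` by `B`. -/
inductive TauSeq {S Act : Type} (tr : S → Act → S → Prop) (τ : Act)
    (B : S → S → Prop) (s : S) : S → S → Prop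
  | refl (t : S) : TauSeq tr τ B s t t
  | step {t t' t'' : S} : tr t τ t' → B s t' → TauSeq tr τ B s t' t'' →
      TauSeq tr τ B s t t''

/-- `B` is a branching bisimulation in the LTS given by `tr` with silent action `τ`. -/
def IsBranchingBisim {S Act : Type} (tr : S → Act → S → Prop) (τ : Act)
    (B : S → S → Prop) : Prop :=
  ∀ s t, B s t →
    (∀ a s', tr s a s' →
      ((a = τ ∧ B s' t) ∨
        ∃ tk t', TauSeq tr τ B s t tk ∧ tr tk a t' ∧ B s' t')) ∧
    (∀ a t', tr t a t' →
      ((a = τ ∧ B s t') ∨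
        ∃ sk s', TauSeq tr τ (fun u v => B v u) t s sk ∧ tr sk a s' ∧ B s' t'))

/-- Branching bisimilarity: `s ~ t` iff some branching bisimulation contains `(s,t)`. -/
def BBisim {S Act : Type} (tr : S → Act → S → Prop) (τ : Act) (s t : S) : Prop :=
  ∃ B, IsBranchingBisim tr τ B ∧ B s t

/-- `Steps tr s w t`: there is a path from `s` to `t` labelled by the word `w`. -/
inductive Steps {S Act : Type} (tr : S → Act → S → Prop) : S → List Act → S → Prop
  | refl (s : S) : Steps tr s [] s
  | step {s : S} {a : Act} {s' : S} {w : List Act} {t : S} :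
      tr s a s' → Steps tr s' w t → Steps tr s (a :: w) t

/-- A state is silent if only τ-labelled words can be performed from it. -/
def SilentState {S Act : Type} (tr : S → Act → S → Prop) (τ : Act) (s : S) : Prop :=
  ∀ w s', Steps tr s w s' → ∀ a ∈ w, a = τ

/-- A τ-path in which no transition is class-changing (each step stays in the same
`~`-class). -/
inductive TauNC {S Act : Type} (tr : S → Act → S → Prop) (τ : Act) : S → S → Prop
  | refl (t : S) : TauNC tr τ t t
  | step {t t' t'' : S} : tr t τ t' → BBisim tr τ t t' → TauNC tr τ t' t'' →
      TauNC tr τ t t''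

/-- `CCPath tr τ s n t`: there is a path from `s` to `t` containing exactly `n`
class-changing transitions. -/
inductive CCPath {S Act : Type} (tr : S → Act → S → Prop) (τ : Act) : S → ℕ → S → Prop
  | refl (s : S) : CCPath tr τ s 0 s
  | stepEq {s : S} {a : Act} {s' : S} {n : ℕ} {t : S} :
      tr s a s' → BBisim tr τ s s' → CCPath tr τ s' n t → CCPath tr τ s n t
  | stepNe {s : S} {a : Act} {s' : S} {n : ℕ} {t : S} :
      tr s a s' → ¬ BBisim tr τ s s' → CCPath tr τ s' n t → CCPath tr τ s (n + 1) t

/-- The class-change norm: the least number of class-changing transitions on a path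
to a silent state; `⊤` (ω) if no silent state is reachable. -/
noncomputable def ccNorm {S Act : Type} (tr : S → Act → S → Prop) (τ : Act) (s : S) : ℕ∞ :=
  sInf {n : ℕ∞ | ∃ ℓ : ℕ, n = (ℓ : ℕ∞) ∧ ∃ t, CCPath tr τ s ℓ t ∧ SilentState tr τ t}

/-- A BPA system: a finite set of rules `A →a α` (a context-free grammar in
Greibach normal form, no starting variable). -/
structure BPA (V Act : Type) where
  rules : Finset (V × Act × List V)

/-- The transition relation of the LTS `L_G` associated with a BPA system `G`:
`Aβ →a γβ` whenever `A →a γ` is a rule. -/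
def BPA.tr {V Act : Type} (G : BPA V Act) : List V → Act → List V → Prop :=
  fun s a t => ∃ (A : V) (γ β : List V), (A, a, γ) ∈ G.rules ∧ s = A :: β ∧ t = γ ++ β

/-- The (standard, syntactic) norm of a process: the length of a shortest word
leading to the empty process; `⊤` (ω) if there is none. -/
noncomputable def BPA.norm {V Act : Type} (G : BPA V Act) (α : List V) : ℕ∞ :=
  sInf {n : ℕ∞ | ∃ w : List Act, n = (w.length : ℕ∞) ∧ Steps G.tr α w []}

/-- A BPA system is normed if every variable has a finite norm. -/
def BPA.Normed {V Act : Type} (G : BPA V Act) : Prop :=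
  ∀ A : V, G.norm [A] ≠ ⊤

/-- The transition relation of `L_{G,R}`: as `L_G`, but all outgoing transitions of
states in `R*` are removed. -/
def BPA.trR {V Act : Type} (G : BPA V Act) (R : Set V) : List V → Act → List V → Prop :=
  fun s a t => G.tr s a t ∧ ¬ (∀ X ∈ s, X ∈ R)

/-- `R_γ`: the set of variables redundant w.r.t. `γ`, i.e. those `X` with `Xγ ~ γ`. -/
def RedSet {V Act : Type} (G : BPA V Act) (τ : Act) (γ : List V) : Set V :=
  {X : V | BBisim G.tr τ (X :: γ) γ}

/-- `α` is a redundancy-free prefix of `αγ`: it cannot be written as `δXβ` with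
`Xβγ ~ βγ`. -/
def RedFreePrefix {V Act : Type} (G : BPA V Act) (τ : Act) (α γ : List V) : Prop :=
  ¬ ∃ (δ : List V) (X : V) (β : List V),
      α = δ ++ X :: β ∧ BBisim G.tr τ (X :: (β ++ γ)) (β ++ γ)

/-- A finite-state transducer reading (and writing) from right to left. -/
structure Transducer (Q V : Type) where
  delta : Q → V → Q × List V
  q0 : Q

/-- Running the transducer on an input string, right to left:
`T.run α q = (q', β)` means `q' ⇐α|β= q`. -/
def Transducer.run {Q V : Type} (T : Transducer Q V) : List V → Q → Q × List V
  | [], q => (q, [])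
  | A :: α, q =>
      let p := T.run α q
      ((T.delta p.1 A).1, (T.delta p.1 A).2 ++ p.2)

/-- `T_q(α)`: the output of `T` on input `α`, started in state `q`. -/
def Transducer.out {Q V : Type} (T : Transducer Q V) (q : Q) (α : List V) : List V :=
  (T.run α q).2

/-- `q`-normal forms: `ε ∈ NF_q`, and `αA ∈ NF_q` iff `A` is a `q`-prime and
`α` is a `q'`-normal form where `q' ⇐A|A= q`. -/
inductive Transducer.NF {Q V : Type} (T : Transducer Q V) : Q → List V → Prop
  | nil (q : Q) : Transducer.NF T q []
  | snoc {q : Q} {A : V} {α : List V} :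
      (T.delta q A).2 = [A] → Transducer.NF T (T.delta q A).1 α →
      Transducer.NF T q (α ++ [A])

/-- A normal-form-computing (nfc) transducer: each `T_q(A)` is a `q`-normal form,
and `q' ⇐A|γ= q` implies `q' ⇐γ|γ= q`. -/
def Transducer.IsNFC {Q V : Type} (T : Transducer Q V) : Prop :=
  ∀ (q : Q) (A : V),
    Transducer.NF T q (T.delta q A).2 ∧ T.run (T.delta q A).2 q = T.delta q A

/-- A τ-path in `L_G` along which the `T_q`-output stays constant. -/
inductive ConstTauSeq {Q V Act : Type} (tr : List V → Act → List V → Prop) (τ : Act)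
    (T : Transducer Q V) (q : Q) : List V → List V → Prop
  | refl (α : List V) : ConstTauSeq tr τ T q α α
  | step {α α' α'' : List V} : tr α τ α' → T.out q α' = T.out q α →
      ConstTauSeq tr τ T q α' α'' → ConstTauSeq tr τ T q α α''

/-- The long move `α ⇒a_q β`. -/
def BigStep {Q V Act : Type} (G : BPA V Act) (τ : Act) (T : Transducer Q V) (q : Q)
    (α : List V) (a : Act) (β : List V) : Prop :=
  (a = τ ∧ β = T.out q α) ∨
  ∃ αk β', ConstTauSeq G.tr τ T q α αk ∧ G.tr αk a β' ∧ β = T.out q β'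

/-- The equivalence `α₁ ≈_q α₂`: the same long moves are available. -/
def TApprox {Q V Act : Type} (G : BPA V Act) (τ : Act) (T : Transducer Q V) (q : Q)
    (α₁ α₂ : List V) : Prop :=
  ∀ a β, BigStep G τ T q α₁ a β ↔ BigStep G τ T q α₂ a β

/-- Consistency of an nfc-transducer with a BPA system (Definition 4.1). -/
def ConsistentWith {Q V Act : Type} (T : Transducer Q V) (G : BPA V Act) (τ : Act) : Prop :=
  (∀ A : V, T.out T.q0 [A] = [] → TApprox G τ T T.q0 [A] []) ∧
  (∀ (q : Q) (A : V), T.out q [A] ≠ [] → TApprox G τ T q [A] (T.out q [A])) ∧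
  (∀ (q : Q) (A C : V), T.out q [A, C] = [C] → T.out q [C] = [C] →
    TApprox G τ T q [A, C] [C])

section General

variable {S Act : Type} {tr : S → Act → S → Prop} {τ : Act}

theorem TauSeq.mono {B B' : S → S → Prop} (h : ∀ u v, B u v → B' u v)
    {s t t' : S} (hs : TauSeq tr τ B s t t') : TauSeq tr τ B' s t t' := by
  induction hs with
  | refl => exact .refl _
  | step hstep hB _ ih => exact .step hstep (h _ _ hB) ih

theorem TauSeq.append {B : S → S → Prop} {s t u v : S}
    (h1 : TauSeq tr τ B s t u) (h2 : TauSeq tr τ B s u v) : TauSeq tr τ B s t v := by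
  induction h1 with
  | refl => exact h2
  | step hstep hB _ ih => exact .step hstep hB (ih h2)

theorem TauSeq.endpoint {B : S → S → Prop} {s t u : S}
    (h : TauSeq tr τ B s t u) (h0 : B s t) : B s u := by
  induction h with
  | refl => exact h0
  | step _ hB _ ih => exact ih hB

theorem TauSeq.toRTG {B : S → S → Prop} {s t u : S} (h : TauSeq tr τ B s t u) :
    Relation.ReflTransGen (fun x y => tr x τ y) t u := by
  induction h with
  | refl => exact .refl
  | step hstep _ _ ih => exact Relation.ReflTransGen.head hstep ih

theorem Steps.append_steps {s t u : S} {w1 w2 : List Act}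
    (h1 : Steps tr s w1 t) (h2 : Steps tr t w2 u) : Steps tr s (w1 ++ w2) u := by
  induction h1 with
  | refl => exact h2
  | step hstep _ ih => exact .step hstep (ih h2)

theorem Steps.single {s t : S} {a : Act} (h : tr s a t) : Steps tr s [a] t :=
  .step h (.refl t)

/-- `BBisim` itself satisfies the branching-bisimulation clauses. -/
theorem bbisim_isBranching : IsBranchingBisim tr τ (BBisim tr τ) := by
  rintro s t ⟨B, hB, hst⟩
  obtain ⟨h1, h2⟩ := hB s t hst
  constructor
  · intro a s' hmv
    rcases h1 a s' hmv with ⟨rfl, h⟩ | ⟨tk, t', hseq, hmv', h⟩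
    · exact Or.inl ⟨rfl, B, hB, h⟩
    · exact Or.inr ⟨tk, t', hseq.mono (fun u v h => ⟨B, hB, h⟩), hmv', B, hB, h⟩
  · intro a t' hmv
    rcases h2 a t' hmv with ⟨rfl, h⟩ | ⟨sk, s', hseq, hmv', h⟩
    · exact Or.inl ⟨rfl, B, hB, h⟩
    · exact Or.inr ⟨sk, s', hseq.mono (fun u v h => ⟨B, hB, h⟩), hmv', B, hB, h⟩

theorem bbisim_refl (s : S) : BBisim tr τ s s := by
  refine ⟨Eq, ?_, rfl⟩
  rintro x y rfl
  constructor
  · intro a s' hmv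
    exact Or.inr ⟨x, s', .refl x, hmv, rfl⟩
  · intro a t' hmv
    exact Or.inr ⟨x, t', .refl x, hmv, rfl⟩

/-- Semi-branching bisimulation. -/
def IsSemi (tr : S → Act → S → Prop) (τ : Act) (B : S → S → Prop) : Prop :=
  ∀ s t, B s t →
    (∀ a s', tr s a s' →
      ∃ tk, Relation.ReflTransGen (fun x y => tr x τ y) t tk ∧ B s tk ∧
        ((a = τ ∧ B s' tk) ∨ ∃ t', tr tk a t' ∧ B s' t')) ∧
    (∀ a t', tr t a t' →
      ∃ sk, Relation.ReflTransGen (fun x y => tr x τ y) s sk ∧ B sk t ∧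
        ((a = τ ∧ B sk t') ∨ ∃ s', tr sk a s' ∧ B s' t'))

def SemiSim (tr : S → Act → S → Prop) (τ : Act) (s t : S) : Prop :=
  ∃ B, IsSemi tr τ B ∧ B s t

theorem isSemi_semiSim : IsSemi tr τ (SemiSim tr τ) := by
  rintro s t ⟨B, hB, hst⟩
  obtain ⟨h1, h2⟩ := hB s t hst
  constructor
  · intro a s' hmv
    rcases h1 a s' hmv with ⟨tk, hr, hk, ⟨rfl, h⟩ | ⟨t', hmv', h⟩⟩
    · exact ⟨tk, hr, ⟨B, hB, hk⟩, Or.inl ⟨rfl, B, hB, h⟩⟩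
    · exact ⟨tk, hr, ⟨B, hB, hk⟩, Or.inr ⟨t', hmv', B, hB, h⟩⟩
  · intro a t' hmv
    rcases h2 a t' hmv with ⟨sk, hr, hk, ⟨rfl, h⟩ | ⟨s', hmv', h⟩⟩
    · exact ⟨sk, hr, ⟨B, hB, hk⟩, Or.inl ⟨rfl, B, hB, h⟩⟩
    · exact ⟨sk, hr, ⟨B, hB, hk⟩, Or.inr ⟨s', hmv', B, hB, h⟩⟩

theorem isSemi_flip {B : S → S → Prop} (hB : IsSemi tr τ B) :
    IsSemi tr τ (fun u v => B v u) := by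
  intro s t hst
  obtain ⟨h1, h2⟩ := hB t s hst
  exact ⟨h2, h1⟩

theorem semiSim_symm {s t : S} (h : SemiSim tr τ s t) : SemiSim tr τ t s := by
  obtain ⟨B, hB, hst⟩ := h
  exact ⟨fun u v => B v u, isSemi_flip hB, hst⟩

theorem semi_walk {B : S → S → Prop} (hB : IsSemi tr τ B) {s t t₁ : S}
    (hst : B s t) (hw : Relation.ReflTransGen (fun x y => tr x τ y) t t₁) :
    ∃ s₁, Relation.ReflTransGen (fun x y => tr x τ y) s s₁ ∧ B s₁ t₁ := by
  induction hw with
  | refl => exact ⟨s, .refl, hst⟩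
  | tail _ hstep ih =>
    obtain ⟨s₁, hr1, h1⟩ := ih
    rcases (hB _ _ h1).2 _ _ hstep with ⟨sk, hr2, _, ⟨_, hk⟩ | ⟨s', hmv', h'⟩⟩
    · exact ⟨sk, hr1.trans hr2, hk⟩
    · exact ⟨s', (hr1.trans hr2).tail hmv', h'⟩

theorem isSemi_comp {B₁ B₂ : S → S → Prop} (h1 : IsSemi tr τ B₁) (h2 : IsSemi tr τ B₂) :
    IsSemi tr τ (fun u w => ∃ v, B₁ u v ∧ B₂ v w) := by
  rintro s u ⟨t, hst, htu⟩
  constructor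
  · intro a s' hmv
    rcases (h1 s t hst).1 a s' hmv with ⟨tk, hr, hk, hcase⟩
    obtain ⟨uk, hru, hku⟩ := semi_walk (isSemi_flip h2) htu hr
    rcases hcase with ⟨rfl, hk'⟩ | ⟨t', hmv', hk'⟩
    · exact ⟨uk, hru, ⟨tk, hk, hku⟩, Or.inl ⟨rfl, tk, hk', hku⟩⟩
    · rcases (h2 tk uk hku).1 a t' hmv' with ⟨ul, hru2, hku2, ⟨rfl, hk2⟩ | ⟨u', hmv2, hk2⟩⟩
      · exact ⟨ul, hru.trans hru2, ⟨tk, hk, hku2⟩, Or.inl ⟨rfl, t', hk', hk2⟩⟩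
      · exact ⟨ul, hru.trans hru2, ⟨tk, hk, hku2⟩, Or.inr ⟨u', hmv2, t', hk', hk2⟩⟩
  · intro a u' hmv
    rcases (h2 t u htu).2 a u' hmv with ⟨tk, hr, hk, hcase⟩
    obtain ⟨sk, hrs, hks⟩ := semi_walk h1 hst hr
    rcases hcase with ⟨rfl, hk'⟩ | ⟨t', hmv', hk'⟩
    · exact ⟨sk, hrs, ⟨tk, hks, hk⟩, Or.inl ⟨rfl, tk, hks, hk'⟩⟩
    · rcases (h1 sk tk hks).2 a t' hmv' with ⟨sl, hrs2, hks2, ⟨rfl, hk2⟩ | ⟨s', hmv2, hk2⟩⟩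
      · exact ⟨sl, hrs.trans hrs2, ⟨tk, hks2, hk⟩, Or.inl ⟨rfl, t', hk2, hk'⟩⟩
      · exact ⟨sl, hrs.trans hrs2, ⟨tk, hks2, hk⟩, Or.inr ⟨s', hmv2, t', hk2, hk'⟩⟩

theorem semiSim_trans {s t u : S} (h1 : SemiSim tr τ s t) (h2 : SemiSim tr τ t u) :
    SemiSim tr τ s u := by
  obtain ⟨B₁, hB₁, h1⟩ := h1
  obtain ⟨B₂, hB₂, h2⟩ := h2
  exact ⟨_, isSemi_comp hB₁ hB₂, t, h1, h2⟩

theorem isSemi_of_isBranching {B : S → S → Prop} (hB : IsBranchingBisim tr τ B) :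
    IsSemi tr τ B := by
  intro s t hst
  obtain ⟨h1, h2⟩ := hB s t hst
  constructor
  · intro a s' hmv
    rcases h1 a s' hmv with ⟨rfl, h⟩ | ⟨tk, t', hseq, hmv', h⟩
    · exact ⟨t, .refl, hst, Or.inl ⟨rfl, h⟩⟩
    · exact ⟨tk, hseq.toRTG, hseq.endpoint hst, Or.inr ⟨t', hmv', h⟩⟩
  · intro a t' hmv
    rcases h2 a t' hmv with ⟨rfl, h⟩ | ⟨sk, s', hseq, hmv', h⟩
    · exact ⟨s, .refl, hst, Or.inl ⟨rfl, h⟩⟩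
    · exact ⟨sk, hseq.toRTG, hseq.endpoint hst, Or.inr ⟨s', hmv', h⟩⟩

/-- Basten's stuttering argument. -/
theorem semiSim_stutter {x y₀ y y₁ : S}
    (h0 : Relation.ReflTransGen (fun a b => tr a τ b) y₀ y)
    (h1 : Relation.ReflTransGen (fun a b => tr a τ b) y y₁)
    (hx0 : SemiSim tr τ x y₀) (hx1 : SemiSim tr τ x y₁) : SemiSim tr τ x y := by
  set B' : S → S → Prop := fun u v => SemiSim tr τ u v ∨
    ∃ v₀ v₁, Relation.ReflTransGen (fun a b => tr a τ b) v₀ v ∧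
      Relation.ReflTransGen (fun a b => tr a τ b) v v₁ ∧
      SemiSim tr τ u v₀ ∧ SemiSim tr τ u v₁ with hB'def
  have hsemi : IsSemi tr τ B' := by
    rintro s t (hst | ⟨t₀, t₁, hr0, hr1, hs0, hs1⟩)
    · obtain ⟨c1, c2⟩ := isSemi_semiSim s t hst
      constructor
      · intro a s' hmv
        rcases c1 a s' hmv with ⟨tk, hr, hk, ⟨rfl, h⟩ | ⟨t', hmv', h⟩⟩
        · exact ⟨tk, hr, Or.inl hk, Or.inl ⟨rfl, Or.inl h⟩⟩
        · exact ⟨tk, hr, Or.inl hk, Or.inr ⟨t', hmv', Or.inl h⟩⟩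
      · intro a t' hmv
        rcases c2 a t' hmv with ⟨sk, hr, hk, ⟨rfl, h⟩ | ⟨s', hmv', h⟩⟩
        · exact ⟨sk, hr, Or.inl hk, Or.inl ⟨rfl, Or.inl h⟩⟩
        · exact ⟨sk, hr, Or.inl hk, Or.inr ⟨s', hmv', Or.inl h⟩⟩
    · constructor
      · intro a s' hmv
        rcases (isSemi_semiSim s t₁ hs1).1 a s' hmv with
          ⟨tk, hr, hk, ⟨rfl, h⟩ | ⟨t', hmv', h⟩⟩
        · exact ⟨tk, hr1.trans hr, Or.inl hk, Or.inl ⟨rfl, Or.inl h⟩⟩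
        · exact ⟨tk, hr1.trans hr, Or.inl hk, Or.inr ⟨t', hmv', Or.inl h⟩⟩
      · intro a t' hmv
        obtain ⟨x₁, hrx, hx1t⟩ := semi_walk isSemi_semiSim hs0 hr0
        rcases (isSemi_semiSim x₁ t hx1t).2 a t' hmv with
          ⟨sk, hrs, hks, ⟨rfl, h⟩ | ⟨s', hmv', h⟩⟩
        · exact ⟨sk, hrx.trans hrs, Or.inl hks, Or.inl ⟨rfl, Or.inl h⟩⟩
        · exact ⟨sk, hrx.trans hrs, Or.inl hks, Or.inr ⟨s', hmv', Or.inl h⟩⟩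
  exact ⟨B', hsemi, Or.inr ⟨y₀, y₁, h0, h1, hx0, hx1⟩⟩

theorem rtg_to_tauseq {s tk : S} (hstk : SemiSim tr τ s tk) :
    ∀ {t}, Relation.ReflTransGen (fun a b => tr a τ b) t tk → SemiSim tr τ s t →
      TauSeq tr τ (SemiSim tr τ) s t tk := by
  intro t h
  induction h using Relation.ReflTransGen.head_induction_on with
  | refl => exact fun _ => .refl tk
  | head hstep hrest ih =>
    intro _
    have hv' := semiSim_stutter (Relation.ReflTransGen.single hstep) hrest
      (by assumption) hstk
    exact .step hstep hv' (ih hv')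

theorem semiSim_clause1 {s t : S} (hst : SemiSim tr τ s t) :
    ∀ a s', tr s a s' →
      ((a = τ ∧ SemiSim tr τ s' t) ∨
        ∃ tk t', TauSeq tr τ (SemiSim tr τ) s t tk ∧ tr tk a t' ∧ SemiSim tr τ s' t') := by
  intro a s' hmv
  rcases (isSemi_semiSim s t hst).1 a s' hmv with ⟨tk, hr, hk, ⟨ha, h⟩ | ⟨t', hmv', h⟩⟩
  · rcases hr.cases_tail with rfl | ⟨u, hru, hstep⟩
    · exact Or.inl ⟨ha, h⟩
    · have hsu : SemiSim tr τ s u :=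
        semiSim_stutter hru (Relation.ReflTransGen.single hstep) hst hk
      exact Or.inr ⟨u, tk, rtg_to_tauseq hsu hru hst, ha.symm ▸ hstep, h⟩
  · exact Or.inr ⟨tk, t', rtg_to_tauseq hk hr hst, hmv', h⟩

theorem isBranching_semiSim : IsBranchingBisim tr τ (SemiSim tr τ) := by
  intro s t hst
  constructor
  · exact semiSim_clause1 hst
  · intro a t' hmv
    rcases semiSim_clause1 (semiSim_symm hst) a t' hmv with ⟨rfl, h⟩ | ⟨sk, s', hseq, hmv', h⟩
    · exact Or.inl ⟨rfl, semiSim_symm h⟩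
    · exact Or.inr ⟨sk, s', hseq.mono (fun u v h => semiSim_symm h), hmv', semiSim_symm h⟩

theorem bbisim_iff_semiSim {s t : S} : BBisim tr τ s t ↔ SemiSim tr τ s t := by
  constructor
  · rintro ⟨B, hB, h⟩
    exact ⟨B, isSemi_of_isBranching hB, h⟩
  · intro h
    exact ⟨SemiSim tr τ, isBranching_semiSim, h⟩

theorem bbisim_symm {s t : S} (h : BBisim tr τ s t) : BBisim tr τ t s :=
  bbisim_iff_semiSim.2 (semiSim_symm (bbisim_iff_semiSim.1 h))

theorem bbisim_trans {s t u : S} (h1 : BBisim tr τ s t) (h2 : BBisim tr τ t u) :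
    BBisim tr τ s u :=
  bbisim_iff_semiSim.2 (semiSim_trans (bbisim_iff_semiSim.1 h1) (bbisim_iff_semiSim.1 h2))

end General
section General2

variable {S Act : Type} {tr : S → Act → S → Prop} {τ : Act}

theorem silent_of_dead {s : S} (h : ∀ a u, ¬ tr s a u) : SilentState tr τ s := by
  intro w s' hsteps
  cases hsteps with
  | refl => intro a ha; exact absurd ha List.not_mem_nil
  | step hstep _ => exact absurd hstep (h _ _)

theorem silent_step {s u : S} {a : Act} (hs : SilentState tr τ s) (h : tr s a u) :
    a = τ ∧ SilentState tr τ u := by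
  constructor
  · exact hs [a] u (Steps.single h) a (List.mem_singleton.2 rfl)
  · intro w u' hsteps b hb
    exact hs (a :: w) u' (.step h hsteps) b (List.mem_cons_of_mem a hb)

theorem silent_reach {s t : S} {w : List Act} (hs : SilentState tr τ s)
    (h : Steps tr s w t) : SilentState tr τ t := by
  induction h with
  | refl => exact hs
  | step hstep _ ih => exact ih (silent_step hs hstep).2

theorem silent_rtg {s t : S} (hs : SilentState tr τ s)
    (h : Relation.ReflTransGen (fun x y => tr x τ y) s t) : SilentState tr τ t := by
  induction h with
  | refl => exact hs
  | tail _ hstep ih => exact (silent_step ih hstep).2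

theorem bbisim_of_silent {s t : S} (hs : SilentState tr τ s) (ht : SilentState tr τ t) :
    BBisim tr τ s t := by
  refine ⟨fun u v => SilentState tr τ u ∧ SilentState tr τ v, ?_, hs, ht⟩
  rintro u v ⟨hu, hv⟩
  constructor
  · intro a s' hmv
    obtain ⟨ha, h'⟩ := silent_step hu hmv
    exact Or.inl ⟨ha, h', hv⟩
  · intro a t' hmv
    obtain ⟨ha, h'⟩ := silent_step hv hmv
    exact Or.inl ⟨ha, hu, h'⟩

theorem steps_tau_of_bbisim_silent : ∀ {s w s'}, Steps tr s w s' → ∀ {t : S},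
    BBisim tr τ s t → SilentState tr τ t → ∀ a ∈ w, a = τ := by
  intro s w s' hsteps
  induction hsteps with
  | refl => intro t _ _ a ha; exact absurd ha List.not_mem_nil
  | step hstep _ ih =>
    intro t hst ht b hb
    rcases (bbisim_isBranching _ _ hst).1 _ _ hstep with ⟨ha, h⟩ | ⟨tk, t', hseq, hmv', h⟩
    · rcases List.mem_cons.1 hb with rfl | hb'
      · exact ha
      · exact ih h ht b hb'
    · have htk : SilentState tr τ tk := silent_rtg ht hseq.toRTG
      obtain ⟨ha, ht'⟩ := silent_step htk hmv'
      rcases List.mem_cons.1 hb with rfl | hb'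
      · exact ha
      · exact ih h ht' b hb'

theorem silent_of_bbisim {s t : S} (h : BBisim tr τ s t) (ht : SilentState tr τ t) :
    SilentState tr τ s :=
  fun w s' hsteps => steps_tau_of_bbisim_silent hsteps h ht

theorem tauseq_dead {R : S → S → Prop} {x s sk : S} (h : TauSeq tr τ R x s sk)
    (hdead : ∀ a u, ¬ tr s a u) : sk = s := by
  cases h with
  | refl => rfl
  | step hstep _ _ => exact absurd hstep (hdead _ _)

/-- If `s` is dead and `B s t` for a branching bisimulation `B`, then `t` is silent
and all its τ-derivatives remain related to `s`. -/
theorem dead_partner_steps {B : S → S → Prop} (hB : IsBranchingBisim tr τ B) {s : S}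
    (hdead : ∀ a u, ¬ tr s a u) : ∀ {t w t'}, Steps tr t w t' → B s t →
      B s t' ∧ ∀ a ∈ w, a = τ := by
  intro t w t' hsteps
  induction hsteps with
  | refl => intro h; exact ⟨h, fun a ha => absurd ha List.not_mem_nil⟩
  | step hstep _ ih =>
    intro hst
    rcases (hB _ _ hst).2 _ _ hstep with ⟨ha, h⟩ | ⟨sk, s', hseq, hmv', _⟩
    · obtain ⟨h1, h2⟩ := ih h
      exact ⟨h1, fun b hb => (List.mem_cons.1 hb).elim (fun e => e ▸ ha) (h2 b)⟩
    · rw [tauseq_dead hseq hdead] at hmv'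
      exact absurd hmv' (hdead _ _)

theorem dead_partner_silent {B : S → S → Prop} (hB : IsBranchingBisim tr τ B) {s t : S}
    (hdead : ∀ a u, ¬ tr s a u) (hst : B s t) : SilentState tr τ t :=
  fun w t' hsteps => (dead_partner_steps hB hdead hsteps hst).2

/-- Symmetric version: if `t` is dead then `s` is silent. -/
theorem dead_partner_silent' {B : S → S → Prop} (hB : IsBranchingBisim tr τ B) {s t : S}
    (hdead : ∀ a u, ¬ tr t a u) (hst : B s t) : SilentState tr τ s := by
  have : ∀ {s w s'}, Steps tr s w s' → B s t → ∀ a ∈ w, a = τ := by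
    intro s w s' hsteps
    induction hsteps with
    | refl => intro _ a ha; exact absurd ha List.not_mem_nil
    | step hstep _ ih =>
      intro hst b hb
      rcases (hB _ _ hst).1 _ _ hstep with ⟨ha, h⟩ | ⟨tk, t', hseq, hmv', _⟩
      · exact (List.mem_cons.1 hb).elim (fun e => e ▸ ha) (ih h b)
      · rw [tauseq_dead hseq hdead] at hmv'
        exact absurd hmv' (hdead _ _)
  exact fun w s' hsteps => this hsteps hst

theorem ccpath_of_steps {s t : S} {w : List Act} (h : Steps tr s w t) :
    ∃ ℓ, CCPath tr τ s ℓ t := by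
  induction h with
  | refl => exact ⟨0, .refl _⟩
  | step hstep _ ih =>
    obtain ⟨ℓ, hcc⟩ := ih
    rcases Classical.em (BBisim tr τ _ _) with hbb | hbb
    · exact ⟨ℓ, .stepEq hstep hbb hcc⟩
    · exact ⟨ℓ + 1, .stepNe hstep hbb hcc⟩

theorem ccpath_trans_zero : ∀ {x m y}, CCPath tr τ x m y → m = 0 →
    ∀ {n z}, CCPath tr τ y n z → CCPath tr τ x n z := by
  intro x m y h
  induction h with
  | refl => exact fun _ _ _ h2 => h2
  | stepEq hstep hbb _ ih => exact fun hm _ _ h2 => .stepEq hstep hbb (ih hm h2)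
  | stepNe _ _ _ _ => intro hm; exact absurd hm (Nat.succ_ne_zero _)

theorem tauseq_ccpath {s t tk : S} (h : TauSeq tr τ (BBisim tr τ) s t tk)
    (hst : BBisim tr τ s t) : CCPath tr τ t 0 tk ∧ BBisim tr τ s tk := by
  induction h with
  | refl => exact ⟨.refl _, hst⟩
  | step hstep hB hrest ih =>
    obtain ⟨h1, h2⟩ := ih hB
    exact ⟨.stepEq hstep (bbisim_trans (bbisim_symm hst) hB) h1, h2⟩

/-- Transfer of class-change paths across branching bisimilarity. -/
theorem ccpath_transfer : ∀ {s ℓ sE}, CCPath tr τ s ℓ sE → SilentState tr τ sE →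
    ∀ {t}, BBisim tr τ s t → ∃ tE, CCPath tr τ t ℓ tE ∧ SilentState tr τ tE := by
  intro s ℓ sE h
  induction h with
  | refl =>
    intro hsil t hst
    exact ⟨t, .refl _, silent_of_bbisim (bbisim_symm hst) hsil⟩
  | stepEq hstep hbb _ ih =>
    intro hsil t hst
    exact ih hsil (bbisim_trans (bbisim_symm hbb) hst)
  | stepNe hstep hne hrest ih =>
    intro hsil t hst
    rcases (bbisim_isBranching _ _ hst).1 _ _ hstep with ⟨_, h⟩ | ⟨tk, t', hseq, hmv', h⟩
    · exact absurd (bbisim_trans hst (bbisim_symm h)) hne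
    · obtain ⟨hcc0, hstk⟩ := tauseq_ccpath hseq hst
      obtain ⟨tE, hcc, hsil'⟩ := ih hsil h
      have hne' : ¬ BBisim tr τ tk t' := by
        intro hbb
        exact hne (bbisim_trans hstk (bbisim_trans hbb (bbisim_symm h)))
      exact ⟨tE, ccpath_trans_zero hcc0 rfl (.stepNe hmv' hne' hcc), hsil'⟩

end General2
section GeneralClauses

variable {S Act : Type} {tr : S → Act → S → Prop} {τ : Act}

theorem bbisim_clauses_mono {B : S → S → Prop}
    (hmono : ∀ u v, BBisim tr τ u v → B u v) {s t : S} (h : BBisim tr τ s t) :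
    (∀ a s', tr s a s' →
      ((a = τ ∧ B s' t) ∨ ∃ tk t', TauSeq tr τ B s t tk ∧ tr tk a t' ∧ B s' t')) ∧
    (∀ a t', tr t a t' →
      ((a = τ ∧ B s t') ∨
        ∃ sk s', TauSeq tr τ (fun u v => B v u) t s sk ∧ tr sk a s' ∧ B s' t')) := by
  obtain ⟨c1, c2⟩ := bbisim_isBranching s t h
  constructor
  · intro a s' hmv
    rcases c1 a s' hmv with ⟨ha, h'⟩ | ⟨tk, t', hseq, hmv', h'⟩
    · exact Or.inl ⟨ha, hmono _ _ h'⟩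
    · exact Or.inr ⟨tk, t', hseq.mono (fun u v hh => hmono u v hh), hmv', hmono _ _ h'⟩
  · intro a t' hmv
    rcases c2 a t' hmv with ⟨ha, h'⟩ | ⟨sk, s', hseq, hmv', h'⟩
    · exact Or.inl ⟨ha, hmono _ _ h'⟩
    · exact Or.inr ⟨sk, s', hseq.mono (fun u v hh => hmono v u hh), hmv', hmono _ _ h'⟩

end GeneralClauses

section BPABasic

variable {V Act : Type} {G : BPA V Act} {τ : Act} {γ : List V}

theorem BPA.tr_nil {a : Act} {u : List V} : ¬ G.tr [] a u := by
  rintro ⟨A, ξ, β, _, h, _⟩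
  exact List.cons_ne_nil A β h.symm

theorem BPA.tr_append {s t : List V} {a : Act} (h : G.tr s a t) :
    G.tr (s ++ γ) a (t ++ γ) := by
  obtain ⟨A, ξ, β, hr, rfl, rfl⟩ := h
  exact ⟨A, ξ, β ++ γ, hr, rfl, List.append_assoc ξ β γ⟩

theorem BPA.tr_append_inv {δ : List V} {a : Act} {u : List V}
    (h : G.tr (δ ++ γ) a u) (hne : δ ≠ []) :
    ∃ δ', u = δ' ++ γ ∧ G.tr δ a δ' := by
  obtain ⟨A, ξ, β, hr, heq, rfl⟩ := h
  cases δ with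
  | nil => exact absurd rfl hne
  | cons d δt =>
    rw [List.cons_append] at heq
    injection heq with h1 h2
    subst h1
    refine ⟨ξ ++ δt, ?_, d, ξ, δt, hr, rfl, rfl⟩
    rw [← h2, List.append_assoc]

theorem BPA.steps_append {s t : List V} {w : List Act} (h : Steps G.tr s w t) :
    Steps G.tr (s ++ γ) w (t ++ γ) := by
  induction h with
  | refl => exact .refl _
  | step hstep _ ih => exact .step (BPA.tr_append hstep) ih

theorem steps_nil_inv {w : List Act} {t : List V} (h : Steps G.tr [] w t) :
    w = [] ∧ t = [] := by
  cases h with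
  | refl => exact ⟨rfl, rfl⟩
  | step hstep _ => exact absurd hstep BPA.tr_nil

theorem BPA.terminates (hG : G.Normed) : ∀ s : List V, ∃ w, Steps G.tr s w [] := by
  intro s
  induction s with
  | nil => exact ⟨[], .refl _⟩
  | cons A s ih =>
    obtain ⟨w1, hw1⟩ : ∃ w, Steps G.tr [A] w [] := by
      by_contra hno
      push_neg at hno
      have : G.norm [A] = ⊤ := by
        unfold BPA.norm
        rw [sInf_eq_top]
        rintro n ⟨w, _, hsteps⟩
        exact absurd hsteps (hno w)
      exact hG A this
    obtain ⟨w2, hw2⟩ := ih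
    have h1 : Steps G.tr (A :: s) w1 s := by
      have := BPA.steps_append (γ := s) hw1
      simpa using this
    exact ⟨w1 ++ w2, h1.append_steps hw2⟩

theorem BPA.trR_tr {R : Set V} {s t : List V} {a : Act} (h : G.trR R s a t) :
    G.tr s a t := h.1

theorem BPA.trR_dead {R : Set V} {s : List V} (hall : ∀ X ∈ s, X ∈ R) :
    ∀ (a : Act) (t : List V), ¬ G.trR R s a t := fun _ _ h => h.2 hall

/-- Lifting a `TauSeq` from `(p, q)` to `(p++γ, q++γ)`. -/
theorem tauseq_lift {Rel Rel' : List V → List V → Prop} {s : List V}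
    (hR : ∀ v, Rel s v → Rel' (s ++ γ) (v ++ γ)) :
    ∀ {t tk}, TauSeq G.tr τ Rel s t tk →
      TauSeq G.tr τ Rel' (s ++ γ) (t ++ γ) (tk ++ γ) := by
  intro t tk h
  induction h with
  | refl => exact .refl _
  | step hstep hB _ ih => exact .step (BPA.tr_append hstep) (hR _ hB) ih

/-- Left congruence: `x ~ y` implies `ζx ~ ζy`. -/
theorem bbisim_prepend {x y : List V} (h : BBisim G.tr τ x y) (ζ : List V) :
    BBisim G.tr τ (ζ ++ x) (ζ ++ y) := by
  set B : List V → List V → Prop := fun u v =>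
    (∃ ζ', u = ζ' ++ x ∧ v = ζ' ++ y) ∨ BBisim G.tr τ u v with hBdef
  refine ⟨B, ?_, Or.inl ⟨ζ, rfl, rfl⟩⟩
  rintro u v (⟨ζ', rfl, rfl⟩ | hbb)
  · rcases eq_or_ne ζ' [] with rfl | hne
    · simpa using bbisim_clauses_mono (B := B) (fun u v hh => Or.inr hh) h
    · constructor
      · intro a s' hmv
        obtain ⟨ζ'', rfl, hstep⟩ := BPA.tr_append_inv hmv hne
        exact Or.inr ⟨ζ' ++ y, ζ'' ++ y, .refl _, BPA.tr_append hstep,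
          Or.inl ⟨ζ'', rfl, rfl⟩⟩
      · intro a t' hmv
        obtain ⟨ζ'', rfl, hstep⟩ := BPA.tr_append_inv hmv hne
        exact Or.inr ⟨ζ' ++ x, ζ'' ++ x, .refl _, BPA.tr_append hstep,
          Or.inl ⟨ζ'', rfl, rfl⟩⟩
  · exact bbisim_clauses_mono (B := B) (fun u v hh => Or.inr hh) hbb

/-- Draining a silent prefix along its terminating word. -/
theorem drain_tauseq {Rel : List V → List V → Prop} (s0 : List V)
    (hR : ∀ ζ', SilentState G.tr τ ζ' → Rel s0 (ζ' ++ γ)) :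
    ∀ {ζ w}, Steps G.tr ζ w [] → SilentState G.tr τ ζ →
      TauSeq G.tr τ Rel s0 (ζ ++ γ) γ := by
  have main : ∀ {ζ w z}, Steps G.tr ζ w z → z = [] → SilentState G.tr τ ζ →
      TauSeq G.tr τ Rel s0 (ζ ++ γ) γ := by
    intro ζ w z hsteps
    induction hsteps with
    | refl => rintro rfl _; exact .refl _
    | step hstep _ ih =>
      intro hz hs
      obtain ⟨ha, hs'⟩ := silent_step hs hstep
      subst ha
      exact .step (BPA.tr_append hstep) (hR _ hs') (ih hz hs')
  exact fun {ζ w} h hs => main h rfl hs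

/-- A (fully) silent prefix is redundant: `ζ` silent implies `ζγ ~ γ`. -/
theorem silent_prefix (hG : G.Normed) {ζ : List V} (hsil : SilentState G.tr τ ζ) :
    BBisim G.tr τ (ζ ++ γ) γ := by
  set B : List V → List V → Prop := fun u v =>
    (∃ ζ', u = ζ' ++ γ ∧ γ = v ∧ SilentState G.tr τ ζ') ∨ BBisim G.tr τ u v with hBdef
  refine ⟨B, ?_, Or.inl ⟨ζ, rfl, rfl, hsil⟩⟩
  rintro u v (⟨ζ', rfl, rfl, hs⟩ | hbb)
  · constructor
    · intro a s' hmv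
      rcases eq_or_ne ζ' [] with rfl | hne
      · simp only [List.nil_append] at hmv ⊢
        exact Or.inr ⟨γ, s', .refl _, hmv, Or.inr (bbisim_refl s')⟩
      · obtain ⟨ζ'', rfl, hstep⟩ := BPA.tr_append_inv hmv hne
        obtain ⟨ha, hs'⟩ := silent_step hs hstep
        exact Or.inl ⟨ha, Or.inl ⟨ζ'', rfl, rfl, hs'⟩⟩
    · intro a t' hmv
      obtain ⟨w, hw⟩ := BPA.terminates hG ζ'
      refine Or.inr ⟨γ, t', drain_tauseq γ ?_ hw hs, hmv, Or.inr (bbisim_refl t')⟩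
      intro ζ'' hs''
      exact Or.inl ⟨ζ'', rfl, rfl, hs''⟩
  · exact bbisim_clauses_mono (B := B) (fun u v hh => Or.inr hh) hbb

/-- Right congruence: `x ~ y` implies `xγ ~ yγ`. -/
theorem bbisim_append_right (hG : G.Normed) {x y : List V}
    (h : BBisim G.tr τ x y) (γ : List V) : BBisim G.tr τ (x ++ γ) (y ++ γ) := by
  set B : List V → List V → Prop := fun u v =>
    (∃ p q, u = p ++ γ ∧ v = q ++ γ ∧ BBisim G.tr τ p q) ∨ BBisim G.tr τ u v with hBdef
  refine ⟨B, ?_, Or.inl ⟨x, y, rfl, rfl, h⟩⟩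
  rintro u v (⟨p, q, rfl, rfl, hpq⟩ | hbb)
  · constructor
    · intro a s' hmv
      rcases eq_or_ne p [] with rfl | hne
      · -- u = γ : moves of γ matched after draining the silent q
        simp only [List.nil_append] at hmv ⊢
        have hqsil : SilentState G.tr τ q :=
          dead_partner_silent bbisim_isBranching (fun a u => BPA.tr_nil) hpq
        obtain ⟨w, hw⟩ := BPA.terminates hG q
        have hdr : TauSeq G.tr τ B γ (q ++ γ) γ :=
          drain_tauseq γ (fun ζ'' hs => Or.inr (bbisim_symm (silent_prefix hG hs))) hw hqsil
        exact Or.inr ⟨γ, s', hdr, hmv, Or.inr (bbisim_refl s')⟩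
      · obtain ⟨p', rfl, hstep⟩ := BPA.tr_append_inv hmv hne
        rcases (bbisim_isBranching _ _ hpq).1 _ _ hstep with
          ⟨ha, h'⟩ | ⟨qk, q', hseq, hmv', h'⟩
        · exact Or.inl ⟨ha, Or.inl ⟨p', q, rfl, rfl, h'⟩⟩
        · refine Or.inr ⟨qk ++ γ, q' ++ γ, ?_, BPA.tr_append hmv',
            Or.inl ⟨p', q', rfl, rfl, h'⟩⟩
          exact tauseq_lift (fun v hv => Or.inl ⟨p, v, rfl, rfl, hv⟩) hseq
    · intro a t' hmv
      rcases eq_or_ne q [] with rfl | hne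
      · simp only [List.nil_append] at hmv ⊢
        have hpsil : SilentState G.tr τ p :=
          dead_partner_silent' bbisim_isBranching (fun a u => BPA.tr_nil) hpq
        obtain ⟨w, hw⟩ := BPA.terminates hG p
        have hdr : TauSeq G.tr τ (fun u v => B v u) γ (p ++ γ) γ :=
          drain_tauseq γ (fun ζ'' hs => Or.inr (silent_prefix hG hs)) hw hpsil
        exact Or.inr ⟨γ, t', hdr, hmv, Or.inr (bbisim_refl t')⟩
      · obtain ⟨q', rfl, hstep⟩ := BPA.tr_append_inv hmv hne
        rcases (bbisim_isBranching _ _ hpq).2 _ _ hstep with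
          ⟨ha, h'⟩ | ⟨pk, p', hseq, hmv', h'⟩
        · exact Or.inl ⟨ha, Or.inl ⟨p, q', rfl, rfl, h'⟩⟩
        · refine Or.inr ⟨pk ++ γ, p' ++ γ, ?_, BPA.tr_append hmv',
            Or.inl ⟨p', q', rfl, rfl, h'⟩⟩
          exact tauseq_lift (fun v hv => Or.inl ⟨v, q, rfl, rfl, hv⟩) hseq
  · exact bbisim_clauses_mono (B := B) (fun u v hh => Or.inr hh) hbb

/-- All variables in `R` gives a redundant prefix. -/
theorem red_all {δ : List V} (hall : ∀ X ∈ (δ : List V), BBisim G.tr τ (X :: γ) γ) :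
    BBisim G.tr τ (δ ++ γ) γ := by
  induction δ with
  | nil => exact bbisim_refl γ
  | cons A δ' ih =>
    have h1 : BBisim G.tr τ (δ' ++ γ) γ := ih (fun X hX => hall X (List.mem_cons_of_mem A hX))
    have h2 := bbisim_prepend h1 [A]
    simp only [List.cons_append, List.singleton_append] at h2 ⊢
    exact bbisim_trans h2 (hall A (List.mem_cons_self))

end BPABasic
section ClaimC

variable {V Act : Type} {G : BPA V Act} {τ : Act} {γ : List V}

theorem descend {Rel : List V → List V → Prop} (s0 : List V)
    (hR : ∀ ζ', SilentState (G.trR (RedSet G τ γ)) τ ζ' → Rel s0 (ζ' ++ γ)) :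
    ∀ (n : ℕ) (ζ : List V), (∃ w : List Act, w.length ≤ n ∧ Steps G.tr ζ w []) →
      SilentState (G.trR (RedSet G τ γ)) τ ζ →
      ∃ ζm, (∀ X ∈ ζm, X ∈ RedSet G τ γ) ∧
        TauSeq G.tr τ Rel s0 (ζ ++ γ) (ζm ++ γ) := by
  intro n
  induction n with
  | zero =>
    rintro ζ ⟨w, hlen, hsteps⟩ _
    have hw : w = [] := List.eq_nil_of_length_eq_zero (Nat.le_zero.1 hlen)
    subst hw
    cases hsteps
    exact ⟨[], fun X hX => absurd hX List.not_mem_nil, .refl _⟩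
  | succ n ih =>
    rintro ζ ⟨w, hlen, hsteps⟩ hsil
    by_cases hall : ∀ X ∈ ζ, X ∈ RedSet G τ γ
    · exact ⟨ζ, hall, .refl _⟩
    · cases hsteps with
      | refl => exact absurd (fun X hX => absurd hX List.not_mem_nil) hall
      | step hstep hrest =>
        have htrR : G.trR (RedSet G τ γ) ζ _ _ := ⟨hstep, hall⟩
        obtain ⟨ha, hsil'⟩ := silent_step hsil htrR
        subst ha
        obtain ⟨ζm, hm, hseq⟩ := ih _ ⟨_, Nat.le_of_succ_le_succ hlen, hrest⟩ hsil'
        exact ⟨ζm, hm, .step (BPA.tr_append hstep) (hR _ hsil') hseq⟩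

/-- Claim C: a state that is silent in `L_{G,R_γ}` is redundant over `γ`. -/
theorem claimC (hG : G.Normed) {ζ : List V}
    (hsil : SilentState (G.trR (RedSet G τ γ)) τ ζ) : BBisim G.tr τ (ζ ++ γ) γ := by
  set B : List V → List V → Prop := fun u v =>
    (∃ ζ', u = ζ' ++ γ ∧ SilentState (G.trR (RedSet G τ γ)) τ ζ' ∧ BBisim G.tr τ v γ) ∨
      BBisim G.tr τ u v with hBdef
  refine ⟨B, ?_, Or.inl ⟨ζ, rfl, hsil, bbisim_refl γ⟩⟩
  rintro u v (⟨ζ', rfl, hs, hvγ⟩ | hbb)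
  · by_cases hall : ∀ X ∈ ζ', X ∈ RedSet G τ γ
    · exact bbisim_clauses_mono (B := B) (fun _ _ hh => Or.inr hh)
        (bbisim_trans (red_all hall) (bbisim_symm hvγ))
    · constructor
      · intro a s' hmv
        have hne : ζ' ≠ [] := by
          rintro rfl
          exact hall (fun X hX => absurd hX List.not_mem_nil)
        obtain ⟨ζ'', rfl, hstep⟩ := BPA.tr_append_inv hmv hne
        have htrR : G.trR (RedSet G τ γ) ζ' a ζ'' := ⟨hstep, hall⟩
        obtain ⟨ha, hs'⟩ := silent_step hs htrR
        exact Or.inl ⟨ha, Or.inl ⟨ζ'', rfl, hs', hvγ⟩⟩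
      · intro a t' hmv
        obtain ⟨w, hw⟩ := BPA.terminates hG ζ'
        obtain ⟨ζm, hm, hseq⟩ := descend (Rel := fun u v' => B v' u) v
          (fun ζ'' hs'' => Or.inl ⟨ζ'', rfl, hs'', hvγ⟩) w.length ζ'
          ⟨w, le_refl _, hw⟩ hs
        have hbis : BBisim G.tr τ (ζm ++ γ) v :=
          bbisim_trans (red_all hm) (bbisim_symm hvγ)
        rcases (bbisim_isBranching _ _ hbis).2 a t' hmv with
          ⟨ha, h'⟩ | ⟨sk, s', hseq2, hmv', h'⟩
        · refine Or.inl ⟨ha, Or.inl ⟨ζ', rfl, hs, ?_⟩⟩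
          exact bbisim_trans (bbisim_symm h') (red_all hm)
        · exact Or.inr ⟨sk, s', hseq.append (hseq2.mono (fun u' v' hh => Or.inr hh)),
            hmv', Or.inr h'⟩
  · exact bbisim_clauses_mono (B := B) (fun u v hh => Or.inr hh) hbb

end ClaimC
/-- A class-change path on a prefix, with classes judged with suffix `γ`. -/
inductive PCC {V Act : Type} (G : BPA V Act) (τ : Act) (γ : List V) :
    List V → ℕ → List V → Prop
  | refl (δ : List V) : PCC G τ γ δ 0 δ
  | stepEq {δ : List V} {a : Act} {δ' : List V} {n : ℕ} {σ : List V} :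
      G.tr δ a δ' → BBisim G.tr τ (δ ++ γ) (δ' ++ γ) → PCC G τ γ δ' n σ →
      PCC G τ γ δ n σ
  | stepNe {δ : List V} {a : Act} {δ' : List V} {n : ℕ} {σ : List V} :
      G.tr δ a δ' → ¬ BBisim G.tr τ (δ ++ γ) (δ' ++ γ) → PCC G τ γ δ' n σ →
      PCC G τ γ δ (n + 1) σ

section Star

variable {V Act : Type} {G : BPA V Act} {τ : Act} {γ : List V}

theorem ccpath_split : ∀ {s n tE}, CCPath G.tr τ s n tE → ∀ δ, s = δ ++ γ →
    (∃ σ, tE = σ ++ γ ∧ PCC G τ γ δ n σ) ∨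
    (∃ k r, n = k + r ∧ PCC G τ γ δ k [] ∧ CCPath G.tr τ γ r tE) := by
  intro s n tE h
  induction h with
  | refl s => exact fun δ hδ => Or.inl ⟨δ, hδ, .refl δ⟩
  | stepEq hstep hbb hrest ih =>
    intro δ hδ
    subst hδ
    rcases eq_or_ne δ [] with rfl | hne
    · exact Or.inr ⟨0, _, by omega, .refl [], .stepEq hstep hbb hrest⟩
    · obtain ⟨δ₁, rfl, hstep'⟩ := BPA.tr_append_inv hstep hne
      rcases ih δ₁ rfl with ⟨σ, htE, hp⟩ | ⟨k, r, hn, hp, hc⟩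
      · exact Or.inl ⟨σ, htE, .stepEq hstep' hbb hp⟩
      · exact Or.inr ⟨k, r, hn, .stepEq hstep' hbb hp, hc⟩
  | stepNe hstep hne2 hrest ih =>
    intro δ hδ
    subst hδ
    rcases eq_or_ne δ [] with rfl | hne
    · exact Or.inr ⟨0, _, by omega, .refl [], .stepNe hstep hne2 hrest⟩
    · obtain ⟨δ₁, rfl, hstep'⟩ := BPA.tr_append_inv hstep hne
      rcases ih δ₁ rfl with ⟨σ, htE, hp⟩ | ⟨k, r, hn, hp, hc⟩
      · exact Or.inl ⟨σ, htE, .stepNe hstep' hne2 hp⟩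
      · exact Or.inr ⟨k + 1, r, by omega, .stepNe hstep' hne2 hp, hc⟩

theorem pcc_expose : ∀ {δ n σ}, PCC G τ γ δ n σ → n = 0 → BBisim G.tr τ (δ ++ γ) γ →
    ∀ β Y, δ = β ++ [Y] → (∃ β', σ = β' ++ [Y]) ∨ BBisim G.tr τ (Y :: γ) γ := by
  intro δ n σ h
  induction h with
  | refl => exact fun _ _ β Y hδ => Or.inl ⟨β, hδ⟩
  | stepEq hstep hbb hrest ih =>
    intro hn hδγ β Y hδ
    rcases eq_or_ne β [] with rfl | hneβ
    · right
      rw [List.nil_append] at hδ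
      subst hδ
      simpa using hδγ
    · obtain ⟨A, ξ, βs, hr, heq, rfl⟩ := hstep
      obtain ⟨b, βt, rfl⟩ := List.exists_cons_of_ne_nil hneβ
      rw [List.cons_append] at hδ
      rw [hδ] at heq
      injection heq with h1 h2
      subst h1 h2
      exact ih hn (bbisim_trans (bbisim_symm (hδ ▸ hbb)) hδγ) (ξ ++ βt) Y
        (List.append_assoc ξ βt [Y]).symm
  | stepNe _ _ _ _ =>
    intro hn
    exact absurd hn (Nat.succ_ne_zero _)

theorem steps_expose : ∀ {σ w z}, Steps G.tr σ w z → z = [] →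
    SilentState G.tr τ (σ ++ γ) → SilentState G.tr τ γ →
    ∀ β Y, σ = β ++ [Y] → BBisim G.tr τ (Y :: γ) γ := by
  intro σ w z h
  induction h with
  | refl =>
    rintro rfl _ _ β Y hσ
    exact absurd hσ.symm (List.append_ne_nil_of_right_ne_nil β (by simp))
  | step hstep hrest ih =>
    intro hz hsσ hsγ β Y hσ
    rcases eq_or_ne β [] with rfl | hneβ
    · rw [List.nil_append] at hσ
      subst hσ
      have : BBisim G.tr τ ([Y] ++ γ) γ := bbisim_of_silent hsσ hsγ
      simpa using this
    · obtain ⟨A, ξ, βs, hr, heq, rfl⟩ := hstep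
      obtain ⟨b, βt, rfl⟩ := List.exists_cons_of_ne_nil hneβ
      rw [List.cons_append] at hσ
      rw [hσ] at heq
      injection heq with h1 h2
      subst h1 h2
      have hs' : SilentState G.tr τ ((ξ ++ (βt ++ [Y])) ++ γ) :=
        (silent_step hsσ (by
          rw [hσ]
          exact BPA.tr_append ⟨b, ξ, βt ++ [Y], hr, rfl, rfl⟩)).2
      exact ih hz hs' hsγ (ξ ++ βt) Y (List.append_assoc ξ βt [Y]).symm

/-- Proposition (∗): if `δγ ~ γ` then every variable of `δ` is redundant w.r.t. `γ`. -/
theorem star (hG : G.Normed) : ∀ δ : List V, BBisim G.tr τ (δ ++ γ) γ →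
    ∀ X ∈ δ, X ∈ RedSet G τ γ := by
  intro δ
  induction δ using List.reverseRecOn with
  | nil => exact fun _ X hX => absurd hX List.not_mem_nil
  | append_singleton β Y ih =>
    intro H
    classical
    have hY : BBisim G.tr τ (Y :: γ) γ := by
      have hPex : ∃ ℓ, ∃ tE, CCPath G.tr τ ((β ++ [Y]) ++ γ) ℓ tE ∧
          SilentState G.tr τ tE := by
        obtain ⟨w, hw⟩ := BPA.terminates hG ((β ++ [Y]) ++ γ)
        obtain ⟨ℓ, hcc⟩ := ccpath_of_steps (τ := τ) hw
        exact ⟨ℓ, [], hcc, silent_of_dead (fun a u => BPA.tr_nil)⟩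
      obtain ⟨tE, hcc, hsil⟩ := Nat.find_spec hPex
      rcases ccpath_split hcc (β ++ [Y]) rfl with ⟨σ, rfl, hp⟩ | ⟨k, r, hkr, hp, hc⟩
      · -- the cc-optimal path stays in the prefix and ends silent
        obtain ⟨wσ, hwσ⟩ := BPA.terminates hG σ
        have hγsil : SilentState G.tr τ γ := silent_reach hsil (BPA.steps_append hwσ)
        have hm0 : Nat.find hPex = 0 := by
          refine Nat.le_zero.1 (Nat.find_min' hPex ?_)
          obtain ⟨tE', hcc', hsil'⟩ :=
            ccpath_transfer (CCPath.refl γ) hγsil (bbisim_symm H)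
          exact ⟨tE', hcc', hsil'⟩
        rcases pcc_expose hp hm0 H β Y rfl with ⟨β', rfl⟩ | hY
        · exact steps_expose hwσ rfl hsil hγsil β' Y rfl
        · exact hY
      · -- the path exposes γ after k class changes; minimality forces k = 0
        have hk0 : k = 0 := by
          have hPr : ∃ tE', CCPath G.tr τ ((β ++ [Y]) ++ γ) r tE' ∧
              SilentState G.tr τ tE' := ccpath_transfer hc hsil (bbisim_symm H)
          have := Nat.find_min' hPex hPr
          omega
        rcases pcc_expose hp hk0 H β Y rfl with ⟨β', hβ'⟩ | hY
        · exact absurd hβ'.symm (List.append_ne_nil_of_right_ne_nil β' (by simp))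
        · exact hY
    have h2 : BBisim G.tr τ ((β ++ [Y]) ++ γ) (β ++ γ) := by
      have := bbisim_prepend hY β
      simpa [List.append_assoc] using this
    have hβ : BBisim G.tr τ (β ++ γ) γ := bbisim_trans (bbisim_symm h2) H
    intro X hX
    rcases List.mem_append.1 hX with hX | hX
    · exact ih hβ X hX
    · rw [List.mem_singleton.1 hX]
      exact hY

end Star
section Main

variable {V Act : Type} {G : BPA V Act} {τ : Act} {γ : List V}

/-- Projecting a matching `TauSeq` in `L_G` (from a non-redundant left state)
down to `L_{G,R_γ}`. -/
theorem project {δ : List V} (hδne : ¬ BBisim G.tr τ (δ ++ γ) γ) :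
    ∀ {t tk}, TauSeq G.tr τ (BBisim G.tr τ) (δ ++ γ) t tk →
      ∀ η, t = η ++ γ → BBisim G.tr τ (δ ++ γ) (η ++ γ) →
      ∃ ηs, tk = ηs ++ γ ∧ BBisim G.tr τ (δ ++ γ) (ηs ++ γ) ∧
        TauSeq (G.trR (RedSet G τ γ)) τ
          (fun p q => BBisim G.tr τ (p ++ γ) (q ++ γ)) δ η ηs := by
  intro t tk hseq
  induction hseq with
  | refl t => exact fun η hη hbb => ⟨η, hη, hbb, .refl η⟩
  | step hstep hB _ ih =>
    rintro η rfl hbb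
    have hηne : η ≠ [] := by
      rintro rfl
      exact hδne hbb
    obtain ⟨η₁, rfl, hstep'⟩ := BPA.tr_append_inv hstep hηne
    have halive : ¬ ∀ X ∈ η, X ∈ RedSet G τ γ := fun hall =>
      hδne (bbisim_trans hbb (red_all hall))
    obtain ⟨ηs, htk, hbb2, hseq'⟩ := ih η₁ rfl hB
    exact ⟨ηs, htk, hbb2, .step ⟨hstep', halive⟩ hB hseq'⟩

theorem forward_clause (hG : G.Normed) {δ η : List V}
    (h : BBisim G.tr τ (δ ++ γ) (η ++ γ)) :
    ∀ a δ', G.trR (RedSet G τ γ) δ a δ' →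
      ((a = τ ∧ BBisim G.tr τ (δ' ++ γ) (η ++ γ)) ∨
        ∃ ηk η', TauSeq (G.trR (RedSet G τ γ)) τ
            (fun p q => BBisim G.tr τ (p ++ γ) (q ++ γ)) δ η ηk ∧
          G.trR (RedSet G τ γ) ηk a η' ∧ BBisim G.tr τ (δ' ++ γ) (η' ++ γ)) := by
  rintro a δ' ⟨htr, halive⟩
  have hδne : ¬ BBisim G.tr τ (δ ++ γ) γ := fun hred => halive (star hG δ hred)
  have hmv : G.tr (δ ++ γ) a (δ' ++ γ) := BPA.tr_append htr
  rcases (bbisim_isBranching _ _ h).1 a _ hmv with ⟨ha, h'⟩ | ⟨tk, t', hseq, hmv', h'⟩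
  · exact Or.inl ⟨ha, h'⟩
  · obtain ⟨ηk, rfl, hbbk, hseq'⟩ := project hδne hseq η rfl h
    have hηkne : ηk ≠ [] := by
      rintro rfl
      exact hδne hbbk
    obtain ⟨η', rfl, hstep'⟩ := BPA.tr_append_inv hmv' hηkne
    have halive' : ¬ ∀ X ∈ ηk, X ∈ RedSet G τ γ := fun hall =>
      hδne (bbisim_trans hbbk (red_all hall))
    exact Or.inr ⟨ηk, η', hseq', ⟨hstep', halive'⟩, h'⟩

theorem main_forward (hG : G.Normed) {α β : List V}
    (h : BBisim G.tr τ (α ++ γ) (β ++ γ)) :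
    BBisim (G.trR (RedSet G τ γ)) τ α β := by
  refine ⟨fun δ η => BBisim G.tr τ (δ ++ γ) (η ++ γ), ?_, h⟩
  intro δ η hδη
  constructor
  · exact forward_clause hG hδη
  · intro a η' hmv
    rcases forward_clause hG (bbisim_symm hδη) a η' hmv with
      ⟨ha, h'⟩ | ⟨δk, δ', hseq, hmv', h'⟩
    · exact Or.inl ⟨ha, bbisim_symm h'⟩
    · exact Or.inr ⟨δk, δ', hseq.mono (fun u v hh => bbisim_symm hh), hmv',
        bbisim_symm h'⟩

theorem trR_tauseq_lift {R : Set V} {Rel Rel' : List V → List V → Prop}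
    (hpq : ∀ x y, Rel x y → Rel' (x ++ γ) (y ++ γ)) {p : List V} :
    ∀ {q qk}, TauSeq (G.trR R) τ Rel p q qk →
      TauSeq G.tr τ Rel' (p ++ γ) (q ++ γ) (qk ++ γ) := by
  intro q qk h
  induction h with
  | refl => exact .refl _
  | step hstep hB _ ih => exact .step (BPA.tr_append (BPA.trR_tr hstep)) (hpq _ _ hB) ih

theorem main_backward (hG : G.Normed) {α β : List V}
    (h : BBisim (G.trR (RedSet G τ γ)) τ α β) :
    BBisim G.tr τ (α ++ γ) (β ++ γ) := by
  obtain ⟨B₀, hB₀, hαβ⟩ := h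
  have hdeadL : ∀ {p q}, B₀ p q → (∀ X ∈ p, X ∈ RedSet G τ γ) →
      BBisim G.tr τ (p ++ γ) γ ∧ BBisim G.tr τ (q ++ γ) γ := by
    intro p q hpq hall
    exact ⟨red_all hall,
      claimC hG (dead_partner_silent hB₀ (BPA.trR_dead hall) hpq)⟩
  have hdeadR : ∀ {p q}, B₀ p q → (∀ X ∈ q, X ∈ RedSet G τ γ) →
      BBisim G.tr τ (p ++ γ) γ ∧ BBisim G.tr τ (q ++ γ) γ := by
    intro p q hpq hall
    exact ⟨claimC hG (dead_partner_silent' hB₀ (BPA.trR_dead hall) hpq),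
      red_all hall⟩
  set B : List V → List V → Prop := fun u v =>
    (∃ p q, u = p ++ γ ∧ v = q ++ γ ∧ B₀ p q ∧
      ¬ (∀ X ∈ p, X ∈ RedSet G τ γ) ∧ ¬ (∀ X ∈ q, X ∈ RedSet G τ γ)) ∨
    BBisim G.tr τ u v with hBdef
  have hpair : ∀ p q, B₀ p q → B (p ++ γ) (q ++ γ) := by
    intro p q hpq
    by_cases hp : ∀ X ∈ p, X ∈ RedSet G τ γ
    · obtain ⟨h1, h2⟩ := hdeadL hpq hp
      exact Or.inr (bbisim_trans h1 (bbisim_symm h2))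
    by_cases hq : ∀ X ∈ q, X ∈ RedSet G τ γ
    · obtain ⟨h1, h2⟩ := hdeadR hpq hq
      exact Or.inr (bbisim_trans h1 (bbisim_symm h2))
    exact Or.inl ⟨p, q, rfl, rfl, hpq, hp, hq⟩
  refine ⟨B, ?_, hpair α β hαβ⟩
  rintro u v (⟨p, q, rfl, rfl, hpq, hp, hq⟩ | hbb)
  · constructor
    · intro a s' hmv
      have hpne : p ≠ [] := by
        rintro rfl
        exact hp (fun X hX => absurd hX List.not_mem_nil)
      obtain ⟨p', rfl, hstep⟩ := BPA.tr_append_inv hmv hpne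
      rcases (hB₀ _ _ hpq).1 a p' ⟨hstep, hp⟩ with ⟨ha, h'⟩ | ⟨qk, q', hseq, hmv', h'⟩
      · exact Or.inl ⟨ha, hpair p' q h'⟩
      · exact Or.inr ⟨qk ++ γ, q' ++ γ, trR_tauseq_lift (fun x y hh => hpair _ _ hh) hseq,
          BPA.tr_append (BPA.trR_tr hmv'), hpair p' q' h'⟩
    · intro a t' hmv
      have hqne : q ≠ [] := by
        rintro rfl
        exact hq (fun X hX => absurd hX List.not_mem_nil)
      obtain ⟨q', rfl, hstep⟩ := BPA.tr_append_inv hmv hqne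
      rcases (hB₀ _ _ hpq).2 a q' ⟨hstep, hq⟩ with ⟨ha, h'⟩ | ⟨pk, p', hseq, hmv', h'⟩
      · exact Or.inl ⟨ha, hpair p q' h'⟩
      · exact Or.inr ⟨pk ++ γ, p' ++ γ,
          trR_tauseq_lift (Rel := fun u' v' => B₀ v' u')
            (Rel' := fun u' v' => B v' u') (fun x y hh => hpair _ _ hh) hseq,
          BPA.tr_append (BPA.trR_tr hmv'), hpair p' q' h'⟩
  · exact bbisim_clauses_mono (B := B) (fun u v hh => Or.inr hh) hbb

end Main
/-- Proposition 4.3(3): `αγ ~ βγ` in `L_G` iff `α ~_{R_γ} β`,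
i.e. `α` and `β` are branching bisimilar in `L_{G,R_γ}`. -/
theorem bbisim_append_iff_relative {V Act : Type} (G : BPA V Act) (τ : Act)
    (hG : G.Normed) (α β γ : List V) :
    BBisim G.tr τ (α ++ γ) (β ++ γ) ↔ BBisim (G.trR (RedSet G τ γ)) τ α β := by
  exact ⟨fun h => main_forward hG h, fun h => main_backward hG h⟩
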